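/- Let G be a finite group, let K be a Carter subgroup of G, and let z ∈ Z(K) with z ≠ 1. Assume that any two Carter subgroups of C_G(z) are conjugate in C_G(z). Then the centralizer C_G(z) is self-normalizing in G: N_G(C_G(z)) = C_G(z). -/

import Mathlib

/-- A Carter subgroup of a group `G` is a nilpotent self-normalizing subgroup. -/
def IsCarterSubgroup {G : Type*} [Group G] (K : Subgroup G) : Prop :=
  Group.IsNilpotent K ∧ Subgroup.normalizer (K : Set _) = K

/-- If `H ≤ C` and `H` is self-normalizing in `G`, then `H.subgroupOf C` is
self-normalizing in `C`. -/
lemma subgroupOf_self_normalizing {G : Type*} [Group G] {H C : Subgroup G}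
    (hHC : H ≤ C) (hn : Subgroup.normalizer (H : Set G) = H) :
    Subgroup.normalizer ((H.subgroupOf C : Subgroup C) : Set C) = H.subgroupOf C := by
  refine le_antisymm ?_ Subgroup.le_normalizer
  intro x hx
  have hxN : (x : G) ∈ Subgroup.normalizer (H : Set G) := by
    rw [Subgroup.mem_normalizer_iff]
    intro h
    constructor
    · intro hh
      have hhC : h ∈ C := hHC hh
      have := (Subgroup.mem_normalizer_iff.mp hx ⟨h, hhC⟩).mp
        (by simpa [Subgroup.mem_subgroupOf] using hh)
      simpa [Subgroup.mem_subgroupOf] using this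
    · intro hh
      have hconjC : (x : G) * h * (x : G)⁻¹ ∈ C := hHC hh
      have hhC : h ∈ C := by
        have := C.mul_mem (C.mul_mem (C.inv_mem x.2) hconjC) x.2
        simpa [mul_assoc] using this
      have := (Subgroup.mem_normalizer_iff.mp hx ⟨h, hhC⟩).mpr
        (by simpa [Subgroup.mem_subgroupOf] using hh)
      simpa [Subgroup.mem_subgroupOf] using this
  rw [hn] at hxN
  simpa [Subgroup.mem_subgroupOf] using hxN

/-- The centralizer of a nontrivial central element `z` of a Carter subgroup is
self-normalizing, provided Carter subgroups of `C_G(z)` are conjugate. -/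
theorem centralizer_self_normalizing {G : Type*} [Group G] [Finite G]
    (K : Subgroup G) (hK : IsCarterSubgroup K)
    (z : G) (hz : z ≠ 1) (hzK : z ∈ K) (hzc : ∀ k ∈ K, z * k = k * z)
    (hconj : ∀ K₁ K₂ : Subgroup ↥(Subgroup.centralizer {z}),
      IsCarterSubgroup K₁ → IsCarterSubgroup K₂ →
      ∃ g : ↥(Subgroup.centralizer {z}), K₁.map (MulAut.conj g).toMonoidHom = K₂) :
    Subgroup.normalizer ((Subgroup.centralizer {z} : Subgroup G) : Set G) = Subgroup.centralizer {z} := by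
  set C := Subgroup.centralizer ({z} : Set G) with hCdef
  obtain ⟨hKnil, hKN⟩ := hK
  have hKC : K ≤ C := fun k hk =>
    Subgroup.mem_centralizer_singleton_iff.mpr (hzc k hk).symm
  refine le_antisymm ?_ Subgroup.le_normalizer
  intro g hg
  -- K' is the conjugate of K by g; it lies in C since g normalizes C
  set K' : Subgroup G := K.map (MulAut.conj g).toMonoidHom with hK'def
  have hgC : ∀ h : G, h ∈ C ↔ g * h * g⁻¹ ∈ C := Subgroup.mem_normalizer_iff.mp hg
  have hK'C : K' ≤ C := by
    rintro x ⟨k, hk, rfl⟩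
    exact (hgC k).mp (hKC hk)
  have hK'N : Subgroup.normalizer (K' : Set G) = K' := by
    rw [hK'def, ← Subgroup.map_equiv_normalizer_eq K (MulAut.conj g), hKN]
  -- both K.subgroupOf C and K'.subgroupOf C are Carter subgroups of C
  have hC1 : IsCarterSubgroup (K.subgroupOf C) := by
    refine ⟨?_, subgroupOf_self_normalizing hKC hKN⟩
    haveI := hKnil
    exact nilpotent_of_mulEquiv (Subgroup.subgroupOfEquivOfLe hKC).symm
  have hK'nil : Group.IsNilpotent K' := by
    haveI := hKnil
    exact nilpotent_of_mulEquiv (Subgroup.equivMapOfInjective K _ (MulAut.conj g).injective)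
  have hC2 : IsCarterSubgroup (K'.subgroupOf C) := by
    refine ⟨?_, subgroupOf_self_normalizing hK'C hK'N⟩
    haveI := hK'nil
    exact nilpotent_of_mulEquiv (Subgroup.subgroupOfEquivOfLe hK'C).symm
  obtain ⟨c, hc⟩ := hconj (K.subgroupOf C) (K'.subgroupOf C) hC1 hC2
  -- push the conjugacy back up to G
  have hmap : K.map (MulAut.conj (c : G)).toMonoidHom = K' := by
    have h1 := congrArg (Subgroup.map C.subtype) hc
    rw [Subgroup.map_map, Subgroup.subgroupOf_map_subtype, inf_eq_left.mpr hK'C] at h1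
    have h2 : C.subtype.comp (MulAut.conj c).toMonoidHom
        = (MulAut.conj (c : G)).toMonoidHom.comp C.subtype := by
      ext x
      simp [MulAut.conj]
    rw [h2, ← Subgroup.map_map, Subgroup.subgroupOf_map_subtype,
      inf_eq_left.mpr hKC] at h1
    exact h1
  -- so c⁻¹ * g normalizes K, hence lies in K ≤ C
  have hmem : (c : G)⁻¹ * g ∈ Subgroup.normalizer (K : Set G) := by
    rw [Subgroup.mem_normalizer_iff]
    intro h
    constructor
    · intro hh
      have : g * h * g⁻¹ ∈ K' := ⟨h, hh, rfl⟩
      rw [← hmap] at this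
      obtain ⟨k, hk, hke⟩ := this
      have hce : (c : G) * k * (c : G)⁻¹ = g * h * g⁻¹ := hke
      have hkeq : ((c : G)⁻¹ * g) * h * ((c : G)⁻¹ * g)⁻¹ = k := by
        rw [show k = (c : G)⁻¹ * (g * h * g⁻¹) * (c : G) by rw [← hce]; group]
        group
      rwa [hkeq]
    · intro hh
      have hmem' : (c : G) * (((c : G)⁻¹ * g) * h * ((c : G)⁻¹ * g)⁻¹) * (c : G)⁻¹
          ∈ K.map (MulAut.conj (c : G)).toMonoidHom :=
        ⟨_, hh, rfl⟩
      rw [hmap] at hmem'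
      obtain ⟨k, hk, hke⟩ := hmem'
      have : h = k := by
        have h3 : g * k * g⁻¹
            = (c : G) * (((c : G)⁻¹ * g) * h * ((c : G)⁻¹ * g)⁻¹) * (c : G)⁻¹ := hke
        have h4 : g * k * g⁻¹ = g * h * g⁻¹ := by
          rw [h3]; group
        have := mul_left_cancel (mul_right_cancel h4)
        exact this.symm
      rwa [this]
  rw [hKN] at hmem
  have : (c : G)⁻¹ * g ∈ C := hKC hmem
  have := C.mul_mem c.2 this
  simpa using this
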